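/- Let M be a finite rank-4 loopless hypermodular matroid that is non-modular, and let 𝓜 be a modular cut of M. If 𝓜 contains a non-modular pair {T, T'} of rank-2 flats, then 𝓜 contains a non-modular pair {F, L} of flats with r(F) = 3 and r(L) = 2 such that the modular cut generated by {F, L} equals the modular cut generated by {T, T'}; conversely, if 𝓜 contains a non-modular pair {F, L} of flats with r(F) = 3 and r(L) = 2, then 𝓜 contains a non-modular pair {T, T'} of rank-2 flats such that the modular cut generated by {T, T'} equals the modular cut generated by {F, L}. -/

import Mathlib

open Set Matroid
open scoped Matroid

namespace SMC

variable {α : Type*}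

/-- The rank of a set `X` in a matroid `M`: the maximum cardinality of an
independent subset of `X` (intended for finite matroids). -/
noncomputable def rk (M : Matroid α) (X : Set α) : ℕ :=
  sSup {n | ∃ I, M.Indep I ∧ I ⊆ X ∧ I.ncard = n}

/-- The rank of a matroid: the rank of its ground set. -/
noncomputable def rkM (M : Matroid α) : ℕ := rk M M.E

/-- The modular defect of a pair of sets:
`r(X) + r(Y) - r(X ∪ Y) - r(X ∩ Y)` (a natural number). -/
noncomputable def pairDefect (M : Matroid α) (X Y : Set α) : ℕ :=
  rk M X + rk M Y - rk M (X ∪ Y) - rk M (X ∩ Y)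

/-- A pair of sets is a modular pair if its modular defect is zero. -/
def ModularPair (M : Matroid α) (X Y : Set α) : Prop := pairDefect M X Y = 0

/-- A matroid is modular if every pair of flats is a modular pair. -/
def Modular (M : Matroid α) : Prop :=
  ∀ F L : Set α, M.IsFlat F → M.IsFlat L → ModularPair M F L

/-- A matroid (of rank at least 3) is hypermodular if every pair of flats of
rank `r(M) - 1` is a modular pair. -/
def Hypermodular (M : Matroid α) : Prop :=
  ∀ F L : Set α, M.IsFlat F → M.IsFlat L →
    rk M F + 1 = rkM M → rk M L + 1 = rkM M → ModularPair M F L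

/-- A modular cut of `M`: a collection of flats that is upward closed and
closed under intersections of modular pairs. -/
def ModularCut (M : Matroid α) (𝓜 : Set (Set α)) : Prop :=
  (∀ F ∈ 𝓜, M.IsFlat F) ∧
  (∀ L ∈ 𝓜, ∀ F : Set α, M.IsFlat F → L ⊆ F → F ∈ 𝓜) ∧
  (∀ F ∈ 𝓜, ∀ L ∈ 𝓜, ModularPair M F L → F ∩ L ∈ 𝓜)

/-- A principal modular cut: the collection of all flats containing some fixed flat. -/
def PrincipalCut (M : Matroid α) (𝓜 : Set (Set α)) : Prop :=
  ∃ F : Set α, M.IsFlat F ∧ 𝓜 = {L | M.IsFlat L ∧ F ⊆ L}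

/-- The modular cut generated by a collection `S` of flats:
the smallest modular cut containing `S`. -/
def genCut (M : Matroid α) (S : Set (Set α)) : Set (Set α) :=
  ⋂₀ {𝓜 | ModularCut M 𝓜 ∧ S ⊆ 𝓜}

/-- A Vámos line arrangement in a rank-4 matroid: four pairwise disjoint rank-2
flats, the union of any three of which has rank 4, with `r(T₀ ∪ T₁) = 3`,
`r(Tᵢ ∪ Lⱼ) = 3` for all `i, j`, and `r(L₀ ∪ L₁) = 4`. -/
def VamosQuad (M : Matroid α) (T₀ T₁ L₀ L₁ : Set α) : Prop :=
  M.IsFlat T₀ ∧ M.IsFlat T₁ ∧ M.IsFlat L₀ ∧ M.IsFlat L₁ ∧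
  rk M T₀ = 2 ∧ rk M T₁ = 2 ∧ rk M L₀ = 2 ∧ rk M L₁ = 2 ∧
  Disjoint T₀ T₁ ∧ Disjoint T₀ L₀ ∧ Disjoint T₀ L₁ ∧
  Disjoint T₁ L₀ ∧ Disjoint T₁ L₁ ∧ Disjoint L₀ L₁ ∧
  rk M (T₀ ∪ T₁ ∪ L₀) = 4 ∧ rk M (T₀ ∪ T₁ ∪ L₁) = 4 ∧
  rk M (T₀ ∪ L₀ ∪ L₁) = 4 ∧ rk M (T₁ ∪ L₀ ∪ L₁) = 4 ∧
  rk M (T₀ ∪ T₁) = 3 ∧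
  rk M (T₀ ∪ L₀) = 3 ∧ rk M (T₀ ∪ L₁) = 3 ∧
  rk M (T₁ ∪ L₀) = 3 ∧ rk M (T₁ ∪ L₁) = 3 ∧
  rk M (L₀ ∪ L₁) = 4

/-- The modular defect of a matroid: the sum of the modular defects of all
unordered pairs of flats (the sum over ordered pairs is twice this). -/
noncomputable def matroidDefect (M : Matroid α) : ℕ :=
  (∑ᶠ F ∈ {F | M.IsFlat F}, ∑ᶠ L ∈ {L | M.IsFlat L}, pairDefect M F L) / 2


section Aux

variable {M : Matroid α} {S X Y F K H T L I J B 𝓝 : Set α} {x p : α}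

lemma flat_closure (M : Matroid α) (X : Set α) : M.IsFlat (M.closure X) := by
  have hne : ({F | M.IsFlat F ∧ X ∩ M.E ⊆ F} : Set (Set α)).Nonempty :=
    ⟨M.E, M.ground_isFlat, inter_subset_right⟩
  have hnty : Nonempty {F // M.IsFlat F ∧ X ∩ M.E ⊆ F} := hne.to_subtype
  have h := Matroid.IsFlat.iInter (M := M)
    (Fs := fun F : {F // M.IsFlat F ∧ X ∩ M.E ⊆ F} => F.1) (fun F => F.2.1)
  rwa [closure_def, sInter_eq_iInter]

lemma flat_inter (hF : M.IsFlat F) (hK : M.IsFlat K) : M.IsFlat (F ∩ K) := by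
  have h1 : M.closure (F ∩ K) = F ∩ K := by
    apply subset_antisymm
    · exact subset_inter
        ((M.closure_subset_closure inter_subset_left).trans hF.closure.subset)
        ((M.closure_subset_closure inter_subset_right).trans hK.closure.subset)
    · exact M.subset_closure _ (inter_subset_left.trans hF.subset_ground)
  rw [← h1]; exact flat_closure M _

lemma ncard_le_ncard_basis' (hE : M.E.Finite) (hI : M.Indep I) (hIX : I ⊆ X)
    (hJ : M.IsBasis' J X) : I.ncard ≤ J.ncard := by
  have hIr : (M ↾ X).Indep I := Matroid.restrict_indep_iff.2 ⟨hI, hIX⟩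
  obtain ⟨B, hB, hIB⟩ := hIr.exists_isBase_superset
  have hBJ : B.ncard = J.ncard :=
    hB.ncard_eq_ncard_of_isBase (Matroid.isBase_restrict_iff'.2 hJ)
  have hBfin : B.Finite := hE.subset (Matroid.isBase_restrict_iff'.1 hB).indep.subset_ground
  exact (Set.ncard_le_ncard hIB hBfin).trans hBJ.le

lemma rk_basis' (hE : M.E.Finite) (hJ : M.IsBasis' J X) : rk M X = J.ncard := by
  apply le_antisymm
  · refine csSup_le ⟨0, ∅, M.empty_indep, empty_subset X, by simp⟩ ?_
    rintro n ⟨I, hI, hIX, rfl⟩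
    exact ncard_le_ncard_basis' hE hI hIX hJ
  · refine le_csSup ⟨J.ncard, ?_⟩ ⟨J, hJ.indep, hJ.subset, rfl⟩
    rintro n ⟨I, hI, hIX, rfl⟩
    exact ncard_le_ncard_basis' hE hI hIX hJ

lemma ncard_le_rk (hE : M.E.Finite) (hI : M.Indep I) (hIX : I ⊆ X) :
    I.ncard ≤ rk M X := by
  obtain ⟨J, hJ⟩ := M.exists_isBasis' X
  rw [rk_basis' hE hJ]
  exact ncard_le_ncard_basis' hE hI hIX hJ

lemma rk_mono (hE : M.E.Finite) (hXY : X ⊆ Y) : rk M X ≤ rk M Y := by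
  obtain ⟨J, hJ⟩ := M.exists_isBasis' X
  rw [rk_basis' hE hJ]
  exact ncard_le_rk hE hJ.indep (hJ.subset.trans hXY)

lemma rk_closure (hE : M.E.Finite) (X : Set α) : rk M (M.closure X) = rk M X := by
  obtain ⟨J, hJ⟩ := M.exists_isBasis' X
  rw [rk_basis' hE hJ.isBasis_closure_right.isBasis', rk_basis' hE hJ]

lemma rk_empty (M : Matroid α) : rk M ∅ = 0 := by
  have h : {n | ∃ I, M.Indep I ∧ I ⊆ (∅ : Set α) ∧ I.ncard = n} = {0} := by
    ext n
    constructor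
    · rintro ⟨I, hI, hI0, rfl⟩
      simp [Set.subset_empty_iff.1 hI0]
    · rintro rfl
      exact ⟨∅, M.empty_indep, Subset.rfl, by simp⟩
  rw [rk, h, csSup_singleton]

lemma nonempty_of_rk_ne_zero (h : rk M X ≠ 0) : X.Nonempty := by
  rcases X.eq_empty_or_nonempty with rfl | hne
  · exact absurd (rk_empty M) h
  · exact hne

lemma subset_closure_of_rk_le (hE : M.E.Finite) (hXY : X ⊆ Y) (hY : Y ⊆ M.E)
    (hr : rk M Y ≤ rk M X) : Y ⊆ M.closure X := by
  obtain ⟨I, hI⟩ := M.exists_isBasis' X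
  obtain ⟨J, hJ, hIJ⟩ := hI.indep.subset_isBasis'_of_subset (hI.subset.trans hXY)
  have hJfin : J.Finite := hE.subset hJ.indep.subset_ground
  have hIJ' : I = J := Set.eq_of_subset_of_ncard_le hIJ
    (by rw [← rk_basis' hE hI, ← rk_basis' hE hJ]; exact hr) hJfin
  calc Y ⊆ M.closure Y := M.subset_closure Y hY
    _ = M.closure J := hJ.closure_eq_closure.symm
    _ = M.closure I := by rw [hIJ']
    _ = M.closure X := hI.closure_eq_closure

lemma flat_eq_of_subset_of_rk_le (hE : M.E.Finite) (hK : M.IsFlat K) (hF : M.IsFlat F)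
    (hKF : K ⊆ F) (h : rk M F ≤ rk M K) : K = F :=
  hKF.antisymm
    ((subset_closure_of_rk_le hE hKF hF.subset_ground h).trans hK.closure.subset)

lemma rk_insert (hE : M.E.Finite) (hX : X ⊆ M.E) (hx : x ∈ M.E)
    (hxcl : x ∉ M.closure X) : rk M (insert x X) = rk M X + 1 := by
  obtain ⟨I, hI⟩ := M.exists_isBasis' X
  have hxI : x ∉ M.closure I := by rwa [hI.closure_eq_closure]
  have hxX : x ∉ X := fun h => hxcl (M.mem_closure_of_mem h hX)
  have hxIni : x ∉ I := fun h => hxX (hI.subset h)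
  have hins : M.Indep (insert x I) := by
    rw [hI.indep.insert_indep_iff]
    exact Or.inl ⟨hx, hxI⟩
  have hIfin : I.Finite := hE.subset hI.indep.subset_ground
  apply le_antisymm
  · obtain ⟨J, hJ⟩ := M.exists_isBasis' (insert x X)
    have hJfin : J.Finite := hE.subset hJ.indep.subset_ground
    have h1 : (J \ {x}).ncard ≤ rk M X := by
      refine ncard_le_rk hE (hJ.indep.diff _) ?_
      rintro y ⟨hyJ, hy⟩
      rcases hJ.subset hyJ with h | h
      · exact absurd h hy
      · exact h
    have h2 : J.ncard ≤ (J \ {x}).ncard + 1 := by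
      rcases em (x ∈ J) with h | h
      · rw [Set.ncard_diff_singleton_add_one h hJfin]
      · rw [Set.diff_singleton_eq_self h]; omega
    rw [rk_basis' hE hJ]; omega
  · have hc : (insert x I).ncard = I.ncard + 1 := Set.ncard_insert_of_notMem hxIni hIfin
    have hle := ncard_le_rk hE hins (insert_subset_insert hI.subset)
    rw [rk_basis' hE hI, ← hc]
    exact hle

lemma one_le_rk (hE : M.E.Finite) (hloop : M.closure ∅ = ∅) (hp : p ∈ X)
    (hX : X ⊆ M.E) : 1 ≤ rk M X := by
  have hi : M.Indep {p} := by
    rw [show ({p} : Set α) = insert p ∅ by simp, Matroid.insert_indep_iff]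
    exact ⟨M.empty_indep, fun _ => ⟨hX hp, by simp [hloop]⟩⟩
  have h := ncard_le_rk hE hi (singleton_subset_iff.2 hp)
  simpa using h

lemma modularCut_flats (M : Matroid α) : ModularCut M {F | M.IsFlat F} :=
  ⟨fun _ h => h, fun _ _ F hF _ => hF, fun F hF L hL _ => flat_inter hF hL⟩

variable {S𝓢 : Set (Set α)}

lemma subset_genCut {S : Set (Set α)} (hS : ∀ F ∈ S, M.IsFlat F) : S ⊆ genCut M S := by
  intro F hF
  simp only [genCut, mem_sInter, mem_setOf_eq]
  exact fun 𝓝 h => h.2 hF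

lemma genCut_subset {S 𝓝 : Set (Set α)} (h : ModularCut M 𝓝) (hS : S ⊆ 𝓝) :
    genCut M S ⊆ 𝓝 :=
  sInter_subset_of_mem ⟨h, hS⟩

lemma genCut_modularCut {S : Set (Set α)} (hS : ∀ F ∈ S, M.IsFlat F) :
    ModularCut M (genCut M S) := by
  refine ⟨fun F hF => ?_, fun L hL F hF hLF => ?_, fun F hF L hL hmp => ?_⟩
  · exact (genCut_subset (modularCut_flats M) hS hF : M.IsFlat F)
  · simp only [genCut, mem_sInter, mem_setOf_eq] at hL ⊢
    exact fun 𝓝 h𝓝 => h𝓝.1.2.1 L (hL 𝓝 h𝓝) F hF hLF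
  · simp only [genCut, mem_sInter, mem_setOf_eq] at hF hL ⊢
    exact fun 𝓝 h𝓝 => h𝓝.1.2.2 F (hF 𝓝 h𝓝) L (hL 𝓝 h𝓝) hmp

lemma genCut_pair_eq (hT : M.IsFlat T) (hL : M.IsFlat L) (hF : M.IsFlat F) (hH : M.IsFlat H)
    (hTF : T ⊆ F) (hLH : L ⊆ H) (hmp : ModularPair M F H) (hFH : F ∩ H = T) :
    genCut M {F, L} = genCut M {T, L} := by
  have hflatsFL : ∀ X ∈ ({F, L} : Set (Set α)), M.IsFlat X := by
    rintro X hX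
    rcases hX with rfl | hX
    · exact hF
    · rw [mem_singleton_iff] at hX; subst hX; exact hL
  have hflatsTL : ∀ X ∈ ({T, L} : Set (Set α)), M.IsFlat X := by
    rintro X hX
    rcases hX with rfl | hX
    · exact hT
    · rw [mem_singleton_iff] at hX; subst hX; exact hL
  apply subset_antisymm
  · refine genCut_subset (genCut_modularCut hflatsTL) ?_
    rintro X hX
    rcases hX with rfl | hX
    · exact (genCut_modularCut hflatsTL).2.1 T
        (subset_genCut hflatsTL (mem_insert _ _)) X hF hTF
    · rw [mem_singleton_iff] at hX; subst hX
      exact subset_genCut hflatsTL (mem_insert_of_mem _ rfl)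
  · refine genCut_subset (genCut_modularCut hflatsFL) ?_
    rintro X hX
    rcases hX with rfl | hX
    · have hHmem : H ∈ genCut M {F, L} :=
        (genCut_modularCut hflatsFL).2.1 L
          (subset_genCut hflatsFL (mem_insert_of_mem _ rfl)) H hH hLH
      have h := (genCut_modularCut hflatsFL).2.2 F
        (subset_genCut hflatsFL (mem_insert _ _)) H hHmem hmp
      rwa [hFH] at h
    · rw [mem_singleton_iff] at hX; subst hX
      exact subset_genCut hflatsFL (mem_insert_of_mem _ rfl)

end Aux

/-- Let M be a finite rank-4 loopless hypermodular non-modular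
matroid and 𝓜 a modular cut. If 𝓜 contains a non-modular pair of rank-2 flats,
it contains a non-modular pair of flats of ranks 3 and 2 generating the same
modular cut; and conversely. -/
theorem statement_9 {α : Type*} (M : Matroid α) (hfin : M.E.Finite)
    (hrk : rkM M = 4) (hloopless : M.closure ∅ = ∅) (hhm : Hypermodular M)
    (hnonmod : ¬ Modular M)
    (𝓜 : Set (Set α)) (hcut : ModularCut M 𝓜) :
    (∀ T T' : Set α, T ∈ 𝓜 → T' ∈ 𝓜 → rk M T = 2 → rk M T' = 2 →
      ¬ ModularPair M T T' →
      ∃ F L : Set α, F ∈ 𝓜 ∧ L ∈ 𝓜 ∧ rk M F = 3 ∧ rk M L = 2 ∧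
        ¬ ModularPair M F L ∧ genCut M {F, L} = genCut M {T, T'}) ∧
    (∀ F L : Set α, F ∈ 𝓜 → L ∈ 𝓜 → rk M F = 3 → rk M L = 2 →
      ¬ ModularPair M F L →
      ∃ T T' : Set α, T ∈ 𝓜 ∧ T' ∈ 𝓜 ∧ rk M T = 2 ∧ rk M T' = 2 ∧
        ¬ ModularPair M T T' ∧ genCut M {T, T'} = genCut M {F, L}) := by
  have hE := hfin
  constructor
  · -- Forward direction
    intro T T' hT𝓜 hT'𝓜 hrT hrT' hnm
    have hTflat := hcut.1 T hT𝓜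
    have hT'flat := hcut.1 T' hT'𝓜
    have hlt : rk M (T ∪ T') + rk M (T ∩ T') < rk M T + rk M T' := by
      by_contra hcon
      push_neg at hcon
      apply hnm
      simp only [ModularPair, pairDefect]
      omega
    have hT'ne : T'.Nonempty := nonempty_of_rk_ne_zero (by rw [hrT']; omega)
    have hsubE : T ∪ T' ⊆ M.E := union_subset hTflat.subset_ground hT'flat.subset_ground
    -- rk (T ∪ T') ≥ 3
    have hge3 : 3 ≤ rk M (T ∪ T') := by
      by_contra hcon
      push_neg at hcon
      have hle : rk M (T ∪ T') ≤ rk M T := by omega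
      have hsub := subset_closure_of_rk_le hE subset_union_left hsubE hle
      rw [hTflat.closure] at hsub
      have hT'T : T' ⊆ T := (subset_union_right : T' ⊆ T ∪ T').trans hsub
      have hTT' : T' = T := flat_eq_of_subset_of_rk_le hE hT'flat hTflat hT'T (by omega)
      rw [hTT', union_self, inter_self, hrT] at hlt
      omega
    -- T ∩ T' = ∅
    have hdisj : T ∩ T' = ∅ := by
      by_contra hcon
      obtain ⟨q, hq⟩ := nonempty_iff_ne_empty.2 hcon
      have h1 : 1 ≤ rk M (T ∩ T') :=
        one_le_rk hE hloopless hq (inter_subset_left.trans hTflat.subset_ground)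
      omega
    have hrU : rk M (T ∪ T') = 3 := by
      have h0 : rk M (T ∩ T') = 0 := by rw [hdisj, rk_empty]
      omega
    set H := M.closure (T ∪ T') with hHdef
    have hHflat : M.IsFlat H := flat_closure M _
    have hrH : rk M H = 3 := by rw [hHdef, rk_closure hE, hrU]
    have hTH : T ⊆ H := (subset_union_left : T ⊆ T ∪ T').trans (M.subset_closure _ hsubE)
    have hT'H : T' ⊆ H := (subset_union_right : T' ⊆ T ∪ T').trans (M.subset_closure _ hsubE)
    -- a point outside H
    have hne : (M.E \ H).Nonempty := by
      rw [nonempty_iff_ne_empty]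
      intro h0
      have hEH : M.E ⊆ H := diff_eq_empty.1 h0
      have hHE : H = M.E := (M.closure_subset_ground _).antisymm hEH
      rw [rkM] at hrk
      rw [hHE] at hrH
      omega
    obtain ⟨x, hxE, hxH⟩ := hne
    have hxclT : x ∉ M.closure T :=
      fun h => hxH (M.closure_subset_closure (subset_union_left : T ⊆ T ∪ T') h)
    have hrTx : rk M (insert x T) = 3 := by
      rw [rk_insert hE hTflat.subset_ground hxE hxclT, hrT]
    have hinsE : insert x T ⊆ M.E := insert_subset hxE hTflat.subset_ground
    set F := M.closure (insert x T) with hFdef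
    have hFflat : M.IsFlat F := flat_closure M _
    have hrF : rk M F = 3 := by rw [hFdef, rk_closure hE, hrTx]
    have hTF : T ⊆ F := (subset_insert _ _).trans (M.subset_closure _ hinsE)
    have hxF : x ∈ F := M.subset_closure _ hinsE (mem_insert _ _)
    -- F ∩ H = T
    have hFHflat : M.IsFlat (F ∩ H) := flat_inter hFflat hHflat
    have hinter : F ∩ H = T := by
      have h2 : rk M (F ∩ H) ≠ 3 := by
        intro h3
        have heq : F ∩ H = F :=
          flat_eq_of_subset_of_rk_le hE hFHflat hFflat inter_subset_left
            (by rw [h3, hrF])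
        have hFsubH : F ⊆ H := by rw [← heq]; exact inter_subset_right
        exact hxH (hFsubH hxF)
      have hTsub : T ⊆ F ∩ H := subset_inter hTF hTH
      have hle3 : rk M (F ∩ H) ≤ 3 := by
        have := rk_mono hE (inter_subset_left : F ∩ H ⊆ F)
        omega
      have hge2 : 2 ≤ rk M (F ∩ H) := by
        have := rk_mono hE hTsub
        omega
      exact (flat_eq_of_subset_of_rk_le hE hTflat hFHflat hTsub (by omega)).symm
    -- F ∩ T' = ∅
    have hFT' : F ∩ T' = ∅ := by
      rw [eq_empty_iff_forall_notMem]
      rintro q ⟨hqF, hqT'⟩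
      have hqE : q ∈ M.E := hT'flat.subset_ground hqT'
      have hqT : q ∉ T := by
        intro h
        have hmem : q ∈ T ∩ T' := ⟨h, hqT'⟩
        rw [hdisj] at hmem
        exact hmem
      have hqclT : q ∉ M.closure T := by rw [hTflat.closure]; exact hqT
      have hrTq : rk M (insert q T) = 3 := by
        rw [rk_insert hE hTflat.subset_ground hqE hqclT, hrT]
      have hKflat : M.IsFlat (M.closure (insert q T)) := flat_closure M _
      have hrK : rk M (M.closure (insert q T)) = 3 := by rw [rk_closure hE, hrTq]
      have hKF : M.closure (insert q T) ⊆ F := by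
        have hsub : insert q T ⊆ F := insert_subset hqF hTF
        exact (M.closure_subset_closure hsub).trans hFflat.closure.subset
      have hKeqF : M.closure (insert q T) = F :=
        flat_eq_of_subset_of_rk_le hE hKflat hFflat hKF (by rw [hrK, hrF])
      have hKH : M.closure (insert q T) ⊆ H := by
        have hsub : insert q T ⊆ H := insert_subset (hT'H hqT') hTH
        exact (M.closure_subset_closure hsub).trans hHflat.closure.subset
      exact hxH (hKH (hKeqF ▸ hxF))
    -- rk (F ∪ T') = 4
    have hFT'subE : F ∪ T' ⊆ M.E :=
      union_subset hFflat.subset_ground hT'flat.subset_ground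
    have hr4 : rk M (F ∪ T') = 4 := by
      have hle : rk M (F ∪ T') ≤ 4 := by
        rw [rkM] at hrk
        have := rk_mono hE hFT'subE
        omega
      have hge : 3 ≤ rk M (F ∪ T') := by
        have := rk_mono hE (subset_union_left : F ⊆ F ∪ T')
        omega
      by_contra hcon
      have h3 : rk M (F ∪ T') ≤ rk M F := by rw [hrF]; omega
      have hsub := subset_closure_of_rk_le hE subset_union_left hFT'subE h3
      rw [hFflat.closure] at hsub
      obtain ⟨q, hq⟩ := hT'ne
      have : q ∈ F ∩ T' := ⟨hsub (mem_union_right _ hq), hq⟩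
      rw [hFT'] at this
      exact this
    have hnm2 : ¬ ModularPair M F T' := by
      simp only [ModularPair, pairDefect]
      rw [hr4, hFT', rk_empty, hrF, hrT']
      omega
    have hF𝓜 : F ∈ 𝓜 := hcut.2.1 T hT𝓜 F hFflat hTF
    have hmpFH : ModularPair M F H :=
      hhm F H hFflat hHflat (by rw [hrF, hrk]) (by rw [hrH, hrk])
    exact ⟨F, T', hF𝓜, hT'𝓜, hrF, hrT', hnm2,
      genCut_pair_eq hTflat hT'flat hFflat hHflat hTF hT'H hmpFH hinter⟩
  · -- Backward direction
    intro F L hF𝓜 hL𝓜 hrF hrL hnm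
    have hFflat := hcut.1 F hF𝓜
    have hLflat := hcut.1 L hL𝓜
    have hlt : rk M (F ∪ L) + rk M (F ∩ L) < rk M F + rk M L := by
      by_contra hcon
      push_neg at hcon
      apply hnm
      simp only [ModularPair, pairDefect]
      omega
    have hLne : L.Nonempty := nonempty_of_rk_ne_zero (by rw [hrL]; omega)
    have hFne : F.Nonempty := nonempty_of_rk_ne_zero (by rw [hrF]; omega)
    have hsubE : F ∪ L ⊆ M.E := union_subset hFflat.subset_ground hLflat.subset_ground
    have hLF_of : rk M (F ∪ L) ≤ 3 → L ⊆ F := by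
      intro h3
      have hle : rk M (F ∪ L) ≤ rk M F := by omega
      have hsub := subset_closure_of_rk_le hE subset_union_left hsubE hle
      rw [hFflat.closure] at hsub
      exact (subset_union_right : L ⊆ F ∪ L).trans hsub
    have hdisj : F ∩ L = ∅ := by
      by_contra hcon
      obtain ⟨q, hq⟩ := nonempty_iff_ne_empty.2 hcon
      have h1 : 1 ≤ rk M (F ∩ L) :=
        one_le_rk hE hloopless hq (inter_subset_left.trans hFflat.subset_ground)
      have hge : 3 ≤ rk M (F ∪ L) := by
        have := rk_mono hE (subset_union_left : F ⊆ F ∪ L)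
        omega
      have hLF : L ⊆ F := hLF_of (by omega)
      rw [union_eq_self_of_subset_right hLF, inter_eq_self_of_subset_right hLF] at hlt
      omega
    have hrU4 : rk M (F ∪ L) = 4 := by
      have h0 : rk M (F ∩ L) = 0 := by rw [hdisj, rk_empty]
      have hle : rk M (F ∪ L) ≤ 4 := by
        rw [rkM] at hrk
        have := rk_mono hE hsubE
        omega
      have hge : 3 ≤ rk M (F ∪ L) := by
        have := rk_mono hE (subset_union_left : F ⊆ F ∪ L)
        omega
      by_contra hcon
      have hLF : L ⊆ F := hLF_of (by omega)
      obtain ⟨q, hq⟩ := hLne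
      have : q ∈ F ∩ L := ⟨hLF hq, hq⟩
      rw [hdisj] at this
      exact this
    obtain ⟨x, hxF⟩ := hFne
    have hxE : x ∈ M.E := hFflat.subset_ground hxF
    have hxL : x ∉ L := by
      intro h
      have : x ∈ F ∩ L := ⟨hxF, h⟩
      rw [hdisj] at this
      exact this
    have hxclL : x ∉ M.closure L := by rw [hLflat.closure]; exact hxL
    have hinsE : insert x L ⊆ M.E := insert_subset hxE hLflat.subset_ground
    set H := M.closure (insert x L) with hHdef
    have hHflat : M.IsFlat H := flat_closure M _
    have hrH : rk M H = 3 := by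
      rw [hHdef, rk_closure hE, rk_insert hE hLflat.subset_ground hxE hxclL, hrL]
    have hLH : L ⊆ H := (subset_insert _ _).trans (M.subset_closure _ hinsE)
    have hH𝓜 : H ∈ 𝓜 := hcut.2.1 L hL𝓜 H hHflat hLH
    have hmpFH : ModularPair M F H :=
      hhm F H hFflat hHflat (by rw [hrF, hrk]) (by rw [hrH, hrk])
    have hT𝓜 : F ∩ H ∈ 𝓜 := hcut.2.2 F hF𝓜 H hH𝓜 hmpFH
    have hTflat : M.IsFlat (F ∩ H) := flat_inter hFflat hHflat
    have hFneH : F ≠ H := by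
      intro h
      obtain ⟨q, hq⟩ := hLne
      have : q ∈ F ∩ L := ⟨h ▸ hLH hq, hq⟩
      rw [hdisj] at this
      exact this
    have hrT : rk M (F ∩ H) = 2 := by
      have hub : rk M (F ∩ H) ≠ 3 := by
        intro h3
        have heq : F ∩ H = F :=
          flat_eq_of_subset_of_rk_le hE hTflat hFflat inter_subset_left
            (by rw [h3, hrF])
        have hFsubH : F ⊆ H := by rw [← heq]; exact inter_subset_right
        exact hFneH (flat_eq_of_subset_of_rk_le hE hFflat hHflat hFsubH (by rw [hrH, hrF]))
      have hle3 : rk M (F ∩ H) ≤ 3 := by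
        have := rk_mono hE (inter_subset_left : F ∩ H ⊆ F)
        omega
      have hmp := hmpFH
      simp only [ModularPair, pairDefect] at hmp
      have h4 : rk M (F ∪ H) ≤ 4 := by
        rw [rkM] at hrk
        have := rk_mono hE (union_subset hFflat.subset_ground hHflat.subset_ground)
        omega
      rw [hrF, hrH] at hmp
      omega
    have hTLdisj : (F ∩ H) ∩ L = ∅ := by
      apply eq_empty_of_subset_empty
      rw [← hdisj]
      exact inter_subset_inter_left _ inter_subset_left
    have hTLsubH : (F ∩ H) ∪ L ⊆ H := union_subset inter_subset_right hLH
    have hrTL : rk M ((F ∩ H) ∪ L) = 3 := by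
      have hle : rk M ((F ∩ H) ∪ L) ≤ 3 := by
        have := rk_mono hE hTLsubH
        omega
      have hge : 2 ≤ rk M ((F ∩ H) ∪ L) := by
        have := rk_mono hE (subset_union_left : F ∩ H ⊆ (F ∩ H) ∪ L)
        omega
      by_contra hcon
      have h2 : rk M ((F ∩ H) ∪ L) ≤ rk M (F ∩ H) := by omega
      have hsub := subset_closure_of_rk_le hE subset_union_left
        (union_subset (inter_subset_left.trans hFflat.subset_ground)
          hLflat.subset_ground) h2
      rw [hTflat.closure] at hsub
      obtain ⟨q, hq⟩ := hLne
      have : q ∈ (F ∩ H) ∩ L := ⟨hsub (mem_union_right _ hq), hq⟩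
      rw [hTLdisj] at this
      exact this
    have hnmTL : ¬ ModularPair M (F ∩ H) L := by
      simp only [ModularPair, pairDefect]
      rw [hrTL, hTLdisj, rk_empty, hrT, hrL]
      omega
    exact ⟨F ∩ H, L, hT𝓜, hL𝓜, hrT, hrL, hnmTL,
      (genCut_pair_eq hTflat hLflat hFflat hHflat inter_subset_left hLH hmpFH rfl).symm⟩

end SMC
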